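/- Let (Ω,Σ,μ) be a σ-finite measure space, (M,d) a metric space, S ⊆ M a countable subset, K ≥ 0, and T : S → L^∞(μ) a map that is pointwise K-Lipschitz μ-a.e., i.e., for every x,y ∈ S, |T(x) − T(y)| ≤ K·d(x,y) holds μ-almost everywhere. Then there exists a map T̂ : M → L^∞(μ) such that T̂(x) = T(x) for every x ∈ S and, for every x,y ∈ M, |T̂(x) − T̂(y)| ≤ K·d(x,y) holds μ-almost everywhere. -/

import Mathlib

open MeasureTheory
open scoped ENNReal NNReal

/-- Let `μ` be a σ-finite measure, `(M,d)` a metric space, `S ⊆ M`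
countable, `K ≥ 0`, and `T : S → L^∞(μ)` pointwise `K`-Lipschitz `μ`-a.e. Then `T` admits
an extension `T̂ : M → L^∞(μ)` that is pointwise `K`-Lipschitz `μ`-a.e. -/
theorem ae_pointwise_lipschitz_extension_Linfty
    {Ω : Type*} [MeasurableSpace Ω] (μ : Measure Ω) [SigmaFinite μ]
    {M : Type*} [MetricSpace M] (S : Set M) (hS : S.Countable)
    (K : ℝ) (hK : 0 ≤ K) (T : S → Lp ℝ ∞ μ)
    (hT : ∀ x y : S, ∀ᵐ ω ∂μ, |T x ω - T y ω| ≤ K * dist (x : M) (y : M)) :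
    ∃ That : M → Lp ℝ ∞ μ,
      (∀ x : S, That x = T x) ∧
      (∀ x y : M, ∀ᵐ ω ∂μ, |That x ω - That y ω| ≤ K * dist x y) := by
  classical
  haveI : Countable S := hS.to_subtype
  by_cases hne : Nonempty S
  · haveI := hne
    obtain ⟨s₀⟩ := hne
    -- measurable representatives
    set g : S → Ω → ℝ := fun s => (Lp.aestronglyMeasurable (T s)).mk _ with hg
    have hgmeas : ∀ s, Measurable (g s) := fun s =>
      (Lp.aestronglyMeasurable (T s)).measurable_mk
    have hgae : ∀ s : S, g s =ᵐ[μ] T s := fun s =>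
      ((Lp.aestronglyMeasurable (T s)).ae_eq_mk).symm
    -- the good set
    set A : Set Ω := {ω | ∀ s t : S, |g s ω - g t ω| ≤ K * dist (s : M) (t : M)} with hA
    have hAmeas : MeasurableSet A := by
      have : A = ⋂ (s : S) (t : S),
          {ω | |g s ω - g t ω| ≤ K * dist (s : M) (t : M)} := by
        ext ω; simp [hA, Set.mem_iInter]
      rw [this]
      exact MeasurableSet.iInter fun s => MeasurableSet.iInter fun t =>
        measurableSet_le (((hgmeas s).sub (hgmeas t)).abs) measurable_const
    have hAae : ∀ᵐ ω ∂μ, ω ∈ A := by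
      rw [hA]
      simp only [Set.mem_setOf_eq]
      rw [ae_all_iff]
      intro s
      rw [ae_all_iff]
      intro t
      filter_upwards [hT s t, hgae s, hgae t] with ω h1 h2 h3
      rw [h2, h3]; exact h1
    -- properties on A
    have key : ∀ ω ∈ A, ∀ x : M,
        BddBelow (Set.range fun s : S => g s ω + K * dist x (s : M)) := by
      intro ω hω x
      refine ⟨g s₀ ω - K * dist x (s₀ : M), ?_⟩
      rintro _ ⟨s, rfl⟩
      show g s₀ ω - K * dist x (s₀ : M) ≤ g s ω + K * dist x (s : M)
      have h1 : g s₀ ω - g s ω ≤ K * dist (s₀ : M) (s : M) :=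
        (abs_le.mp (hω s₀ s)).2
      have h2 : dist (s₀ : M) (s : M) ≤ dist x (s₀ : M) + dist x (s : M) := by
        rw [dist_comm x (s₀ : M)]; exact dist_triangle _ _ _
      nlinarith [mul_le_mul_of_nonneg_left h2 hK]
    -- the extension, raw
    set F : M → Ω → ℝ := fun x ω =>
      if ω ∈ A then ⨅ s : S, (g s ω + K * dist x (s : M)) else 0 with hF
    have hFmeas : ∀ x, Measurable (F x) := by
      intro x
      rw [hF]
      exact Measurable.ite (p := fun ω => ω ∈ A) hAmeas
        (Measurable.iInf (f := fun (s : S) ω => g s ω + K * dist x (s : M))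
          fun s => (hgmeas s).add measurable_const) measurable_const
    have hF_le : ∀ ω ∈ A, ∀ x (s : S), F x ω ≤ g s ω + K * dist x (s : M) := by
      intro ω hω x s
      rw [hF]; simp only [if_pos hω]
      exact ciInf_le (key ω hω x) s
    have hF_ge : ∀ ω ∈ A, ∀ x : M, ∀ c : ℝ,
        (∀ s : S, c ≤ g s ω + K * dist x (s : M)) → c ≤ F x ω := by
      intro ω hω x c hc
      rw [hF]; simp only [if_pos hω]
      exact le_ciInf hc
    -- each F x is in L∞
    have hbound : ∀ x : M, ∀ᵐ ω ∂μ,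
        ‖F x ω‖ ≤ (eLpNorm (T s₀) ∞ μ).toReal + K * dist x (s₀ : M) := by
      intro x
      have hfin : eLpNormEssSup (⇑(T s₀)) μ ≠ ∞ := by
        have := Lp.eLpNorm_lt_top (T s₀)
        rw [eLpNorm_exponent_top] at this
        exact this.ne
      have hb : ∀ᵐ ω ∂μ, |g s₀ ω| ≤ (eLpNorm (T s₀) ∞ μ).toReal := by
        filter_upwards [hgae s₀, ae_le_eLpNormEssSup (f := ⇑(T s₀)) (μ := μ)] with ω h1 h2
        rw [h1, eLpNorm_exponent_top]
        have : (‖(T s₀ : Ω → ℝ) ω‖₊ : ℝ≥0∞).toReal ≤ (eLpNormEssSup (⇑(T s₀)) μ).toReal :=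
          ENNReal.toReal_mono hfin h2
        simpa [Real.norm_eq_abs] using this
      filter_upwards [hAae, hb] with ω hω hbω
      have h1 : F x ω ≤ g s₀ ω + K * dist x (s₀ : M) := hF_le ω hω x s₀
      have h2 : g s₀ ω - K * dist x (s₀ : M) ≤ F x ω := by
        refine hF_ge ω hω x _ fun s => ?_
        have ha : g s₀ ω - g s ω ≤ K * dist (s₀ : M) (s : M) := (abs_le.mp (hω s₀ s)).2
        have h2' : dist (s₀ : M) (s : M) ≤ dist x (s₀ : M) + dist x (s : M) := by
          rw [dist_comm x (s₀ : M)]; exact dist_triangle _ _ _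
        nlinarith [mul_le_mul_of_nonneg_left h2' hK]
      rw [Real.norm_eq_abs, abs_le]
      constructor
      · have := (abs_le.mp hbω).1; linarith
      · have := (abs_le.mp hbω).2; linarith
    have hmem : ∀ x : M, MemLp (F x) ∞ μ := fun x =>
      memLp_top_of_bound (hFmeas x).aestronglyMeasurable _ (hbound x)
    refine ⟨fun x => (hmem x).toLp (F x), ?_, ?_⟩
    · -- extension property
      intro s
      apply Lp.ext
      refine ((hmem _).coeFn_toLp).trans ?_
      filter_upwards [hAae, hgae s] with ω hω hgs
      have h1 : F (s : M) ω ≤ g s ω := by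
        have := hF_le ω hω (s : M) s
        simpa using this
      have h2 : g s ω ≤ F (s : M) ω := by
        refine hF_ge ω hω (s : M) _ fun t => ?_
        have ha : g s ω - g t ω ≤ K * dist (s : M) (t : M) := (abs_le.mp (hω s t)).2
        linarith
      rw [← hgs]; linarith
    · -- Lipschitz property
      intro x y
      filter_upwards [hAae, (hmem x).coeFn_toLp, (hmem y).coeFn_toLp] with ω hω hx hy
      simp only [hx, hy]
      have lip : ∀ u v : M, F u ω ≤ F v ω + K * dist u v := by
        intro u v
        have : F u ω - K * dist u v ≤ F v ω := by
          refine hF_ge ω hω v _ fun s => ?_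
          have h1 : F u ω ≤ g s ω + K * dist u (s : M) := hF_le ω hω u s
          have h2 : dist u (s : M) ≤ dist u v + dist v (s : M) := dist_triangle _ _ _
          nlinarith [mul_le_mul_of_nonneg_left h2 hK]
        linarith
      rw [abs_le]
      constructor
      · have := lip y x; rw [dist_comm y x] at this; linarith
      · have := lip x y; linarith
  · refine ⟨fun _ => 0, fun x => absurd ⟨x⟩ hne, ?_⟩
    intro x y
    filter_upwards [Lp.coeFn_zero ℝ ∞ μ] with ω h0
    rw [h0]
    simp only [Pi.zero_apply, sub_zero, abs_zero]
    positivity
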